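/- arXiv:2203.06868 — 3 statements merged into one kernel-verified Lean document; each statement's English description precedes it below -/
import Mathlib

section
/- Let G be a topological group with a normal series 1 = G₀ ⊴ G₁ ⊴ ⋯ ⊴ Gₙ = G of closed subgroups whose factors G_{i+1}/G_i are each either cyclic or compact. Then any refinement of this series by closed normal subgroups has the same number of infinite cyclic (non-compact cyclic) factors as the original series. -/
open scoped Pointwise

section HirschDefs

variable {G : Type*} [Group G] [TopologicalSpace G]

/-- A finite normal series of closed subgroups of a topological group: it starts at the
trivial subgroup, ends at the whole group, consists of closed subgroups, and each term is
normal in the next. -/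
structure IsClosedSeries {n : ℕ} (c : Fin (n + 1) → Subgroup G) : Prop where
  bot : c 0 = ⊥
  top : c (Fin.last n) = ⊤
  closed : ∀ i, IsClosed ((c i : Set G))
  le : ∀ i : Fin n, c i.castSucc ≤ c i.succ
  normal : ∀ i : Fin n, ((c i.castSucc).subgroupOf (c i.succ)).Normal

/-- The `i`-th factor of the series is infinite cyclic: topologically isomorphic to the
discrete group `ℤ` (discrete topology together with an abstract isomorphism to `ℤ`). -/
def IsZFactor {n : ℕ} (c : Fin (n + 1) → Subgroup G) (i : Fin n) : Prop :=
  ∃ h : ((c i.castSucc).subgroupOf (c i.succ)).Normal,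
    haveI := h
    DiscreteTopology (↥(c i.succ) ⧸ (c i.castSucc).subgroupOf (c i.succ)) ∧
      Nonempty ((↥(c i.succ) ⧸ (c i.castSucc).subgroupOf (c i.succ)) ≃* Multiplicative ℤ)

/-- The number of infinite cyclic factors of a series. -/
noncomputable def zCount {n : ℕ} (c : Fin (n + 1) → Subgroup G) : ℕ :=
  Nat.card {i : Fin n // IsZFactor c i}

end HirschDefs

/-- The (topological) Hirsch length of a topological group: the supremum, over all finite
normal series of closed subgroups, of the number of infinite cyclic factors. -/
noncomputable def hirschLength (G : Type*) [Group G] [TopologicalSpace G] : ℕ∞ :=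
  ⨆ (n : ℕ) (c : Fin (n + 1) → Subgroup G) (_ : IsClosedSeries c), (zCount c : ℕ∞)

/-- The `i`-th factor of the series is cyclic (as an abstract group). -/
def IsCyclicFactor {G : Type*} [Group G] [TopologicalSpace G]
    {n : ℕ} (c : Fin (n + 1) → Subgroup G) (i : Fin n) : Prop :=
  ∃ h : ((c i.castSucc).subgroupOf (c i.succ)).Normal,
    haveI := h
    IsCyclic (↥(c i.succ) ⧸ (c i.castSucc).subgroupOf (c i.succ))

/-- The `i`-th factor of the series is compact. -/
def IsCompactFactor {G : Type*} [Group G] [TopologicalSpace G]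
    {n : ℕ} (c : Fin (n + 1) → Subgroup G) (i : Fin n) : Prop :=
  CompactSpace (↥(c i.succ) ⧸ (c i.castSucc).subgroupOf (c i.succ))



section AuxHirsch
open Subgroup Topology

section ZFacts
variable {Z : Type*} [Group Z]

lemma multz_not_finOrder {x : Multiplicative ℤ} (hx : x ≠ 1) : ¬ IsOfFinOrder x := by
  intro h
  obtain ⟨n, hn, hxn⟩ := h.exists_pow_eq_one
  have h1 : n • x.toAdd = 0 := by rw [← toAdd_pow, hxn, toAdd_one]
  have h2 : x.toAdd = 0 := by
    rcases smul_eq_zero.mp h1 with h' | h'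
    · exact absurd h' hn.ne'
    · exact h'
  exact hx (by rw [← ofAdd_toAdd x, h2, ofAdd_zero])

lemma zfact_torsionfree (ξ : Z ≃* Multiplicative ℤ) {x : Z} {d : ℕ} (hd : d ≠ 0)
    (hx : x ^ d = 1) : x = 1 := by
  by_contra hx1
  have h1 : ξ x ≠ 1 := fun h => hx1 (by simpa using ξ.injective (h.trans (map_one ξ).symm))
  exact multz_not_finOrder h1 (isOfFinOrder_iff_pow_eq_one.mpr
    ⟨d, Nat.pos_of_ne_zero hd, by rw [← map_pow, hx, map_one]⟩)

lemma zfact_comm (ξ : Z ≃* Multiplicative ℤ) (x y : Z) : x * y = y * x := by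
  apply ξ.injective
  rw [map_mul, map_mul, mul_comm]

lemma zpowers_eq_toSubgroup (x : Multiplicative ℤ) :
    Subgroup.zpowers x = AddSubgroup.toSubgroup (AddSubgroup.zmultiples x.toAdd) := by
  ext z
  simp only [Subgroup.mem_zpowers_iff]
  constructor
  · rintro ⟨k, rfl⟩
    exact ⟨k, (toAdd_zpow x k).symm⟩
  · rintro ⟨k, hk⟩
    exact ⟨k, by apply Multiplicative.toAdd.injective; rw [toAdd_zpow]; exact hk⟩

lemma multz_index_ne_zero {H : Subgroup (Multiplicative ℤ)} (hH : H ≠ ⊥) : H.index ≠ 0 := by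
  obtain ⟨x, hx1⟩ := Subgroup.ne_bot_iff_exists_ne_one.mp hH
  have hle : Subgroup.zpowers (x : Multiplicative ℤ) ≤ H := by
    rw [Subgroup.zpowers_le]; exact x.2
  have hz : (Subgroup.zpowers (x : Multiplicative ℤ)).index ≠ 0 := by
    rw [zpowers_eq_toSubgroup, AddSubgroup.index_toSubgroup, Int.index_zmultiples]
    simp only [ne_eq, Int.natAbs_eq_zero]
    intro h
    apply hx1
    apply Subtype.ext
    rw [OneMemClass.coe_one, ← ofAdd_toAdd (x : Multiplicative ℤ), h, ofAdd_zero]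
  intro h0
  exact hz (Nat.eq_zero_of_zero_dvd (h0 ▸ Subgroup.index_dvd_of_le hle))

lemma zfact_index_ne_zero (ξ : Z ≃* Multiplicative ℤ) {S : Subgroup Z} (hS : S ≠ ⊥) :
    S.index ≠ 0 := by
  have h1 : (S.map ξ.toMonoidHom).comap ξ.toMonoidHom = S :=
    Subgroup.comap_map_eq_self_of_injective ξ.injective S
  have h2 := Subgroup.index_comap_of_surjective (S.map ξ.toMonoidHom) (f := ξ.toMonoidHom) ξ.surjective
  rw [h1] at h2
  rw [h2]
  apply multz_index_ne_zero
  intro hbot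
  rw [Subgroup.map_eq_bot_iff] at hbot
  refine hS ((Subgroup.eq_bot_iff_forall _).mpr fun x hx => ?_)
  have h3 := hbot hx
  rw [MonoidHom.mem_ker] at h3
  exact ξ.injective (h3.trans (map_one ξ).symm)

lemma zfact_relindex_ne_zero (ξ : Z ≃* Multiplicative ℤ) {S1 S2 : Subgroup Z} (h12 : S1 ≤ S2)
    (hS : S1 ≠ ⊥) : S1.relIndex S2 ≠ 0 := by
  intro h0
  have := Subgroup.relIndex_mul_index h12
  rw [h0, zero_mul] at this
  exact zfact_index_ne_zero ξ hS this.symm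

lemma icc {C : Type*} [Group C] [IsCyclic C] [Infinite C] :
    Nonempty (C ≃* Multiplicative ℤ) := by
  obtain ⟨g, hg⟩ := IsCyclic.exists_generator (α := C)
  have horder : orderOf g = 0 := Infinite.orderOf_eq_zero_of_forall_mem_zpowers hg
  have hinj : Function.Injective (fun k : ℤ => g ^ k) := by
    rw [injective_zpow_iff_not_isOfFinOrder]
    simpa [← orderOf_eq_zero_iff] using horder
  have hsurj : Function.Surjective (fun k : Multiplicative ℤ => g ^ k.toAdd) := by
    intro x
    obtain ⟨k, hk⟩ := hg x
    exact ⟨Multiplicative.ofAdd k, hk⟩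
  refine ⟨(MulEquiv.ofBijective (zpowersHom C g) ⟨?_, ?_⟩).symm⟩
  · intro a b hab
    exact Multiplicative.toAdd.injective (hinj (by simpa [zpowersHom_apply] using hab))
  · intro x
    obtain ⟨k, hk⟩ := hg x
    exact ⟨Multiplicative.ofAdd k, by simpa [zpowersHom_apply] using hk⟩

lemma zfact_subgroup_infinite {Z : Type*} [Group Z] (ξ : Z ≃* Multiplicative ℤ)
    {S : Subgroup Z} (hS : S ≠ ⊥) : Infinite S := by
  obtain ⟨x, hx1⟩ := Subgroup.ne_bot_iff_exists_ne_one.mp hS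
  have hfin : ¬ IsOfFinOrder (x : Z) := by
    intro h
    obtain ⟨n, hn, hxn⟩ := h.exists_pow_eq_one
    exact hx1 (Subtype.ext (by
      simpa using zfact_torsionfree ξ hn.ne' hxn))
  have hinj : Function.Injective (fun k : ℤ => (⟨(x : Z) ^ k, zpow_mem x.2 k⟩ : S)) := by
    intro a b hab
    have := congrArg (Subtype.val) hab
    exact injective_zpow_iff_not_isOfFinOrder.mpr hfin this
  exact Infinite.of_injective _ hinj

lemma zfact_subgroup_iso {Z : Type*} [Group Z] (ξ : Z ≃* Multiplicative ℤ)
    {S : Subgroup Z} (hS : S ≠ ⊥) : Nonempty (↥S ≃* Multiplicative ℤ) := by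
  have : IsCyclic Z := isCyclic_of_surjective ξ.symm.toMonoidHom ξ.symm.surjective
  have : Infinite S := zfact_subgroup_infinite ξ hS
  exact icc

section Topo
variable {G : Type*} [Group G] [TopologicalSpace G] [IsTopologicalGroup G]

lemma singleton_eq_image_coset {H : Type*} [Group H] [TopologicalSpace H]
    [IsTopologicalGroup H] (h4 : IsOpen ({1} : Set H)) : DiscreteTopology H := by
  rw [discreteTopology_iff_isOpen_singleton_one]
  exact h4

lemma discrete_of_discrete_big {K A B L : Subgroup G} (hKA : K ≤ A) (hAB : A ≤ B) (hBL : B ≤ L)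
    [hN : (K.subgroupOf L).Normal] [hA : (A.subgroupOf B).Normal]
    (hd : DiscreteTopology (↥L ⧸ K.subgroupOf L)) :
    DiscreteTopology (↥B ⧸ A.subgroupOf B) := by
  have h1 : IsOpen ((K.subgroupOf L : Set ↥L)) := by
    have h0 := (isOpen_discrete ({1} : Set (↥L ⧸ K.subgroupOf L))).preimage
      QuotientGroup.continuous_mk
    convert h0 using 1
    ext x
    simp only [Set.mem_preimage, Set.mem_singleton_iff, SetLike.mem_coe]
    rw [QuotientGroup.eq_one_iff]
  have hincl : Continuous (fun b : ↥B => (⟨b.1, hBL b.2⟩ : ↥L)) :=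
    Continuous.subtype_mk continuous_subtype_val _
  have h2 : IsOpen ((K.subgroupOf B : Set ↥B)) := by
    have hset : ((K.subgroupOf B : Set ↥B)) =
        (fun b : ↥B => (⟨b.1, hBL b.2⟩ : ↥L)) ⁻¹' ((K.subgroupOf L : Set ↥L)) := by
      ext b
      simp [Subgroup.mem_subgroupOf]
    rw [hset]
    exact h1.preimage hincl
  have h3 : IsOpen ((A.subgroupOf B : Set ↥B)) :=
    Subgroup.isOpen_mono (fun x hx => hKA (Subgroup.mem_subgroupOf.mp hx)) h2
  apply singleton_eq_image_coset
  have himg : QuotientGroup.mk '' (A.subgroupOf B : Set ↥B) =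
      ({1} : Set (↥B ⧸ A.subgroupOf B)) := by
    ext q
    constructor
    · rintro ⟨x, hx, rfl⟩
      rw [Set.mem_singleton_iff, QuotientGroup.eq_one_iff]
      exact hx
    · rintro rfl
      exact ⟨1, one_mem _, rfl⟩
  rw [← himg]
  exact QuotientGroup.isOpenMap_coe _ h3
end Topo

lemma isQuotientMap_restrict {X Y : Type*} [TopologicalSpace X] [TopologicalSpace Y]
    {f : X → Y} (hc : Continuous f) (ho : IsOpenMap f) {S : Set X}
    (hsat : ∀ x y : X, f x = f y → y ∈ S → x ∈ S) :
    IsQuotientMap (fun x : S => (⟨f x, Set.mem_image_of_mem f x.2⟩ : f '' S)) := by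
  apply IsOpenMap.isQuotientMap
  · intro V hV
    obtain ⟨W, hW, rfl⟩ := isOpen_induced_iff.mp hV
    have himg : (fun x : S => (⟨f x, Set.mem_image_of_mem f x.2⟩ : f '' S)) ''
        (Subtype.val ⁻¹' W) = Subtype.val ⁻¹' (f '' W) := by
      ext t
      constructor
      · rintro ⟨x, hxW, rfl⟩
        exact ⟨x.1, hxW, rfl⟩
      · rintro ⟨x', hx'W, hfx⟩
        obtain ⟨y, s, hs, rfl⟩ := t
        have hx'S : x' ∈ S := hsat x' s hfx hs
        exact ⟨⟨x', hx'S⟩, hx'W, Subtype.ext hfx⟩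
    rw [himg]
    exact (ho W hW).preimage continuous_subtype_val
  · exact Continuous.subtype_mk (hc.comp continuous_subtype_val) _
  · rintro ⟨y, x, hx, rfl⟩
    exact ⟨⟨x, hx⟩, rfl⟩

section Topo
variable {G : Type*} [Group G] [TopologicalSpace G] [IsTopologicalGroup G]

lemma compact_of_compact_big {K A B L : Subgroup G} (hKA : K ≤ A) (hAB : A ≤ B) (hBL : B ≤ L)
    (hBc : IsClosed (B : Set G)) [hN : (K.subgroupOf L).Normal] [hA' : (A.subgroupOf B).Normal]
    (hcpt : CompactSpace (↥L ⧸ K.subgroupOf L)) :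
    CompactSpace (↥B ⧸ A.subgroupOf B) := by
  set S : Set ↥L := (B.subgroupOf L : Set ↥L) with hS
  set f : ↥L → ↥L ⧸ K.subgroupOf L := QuotientGroup.mk with hf
  have hsat : ∀ x y : ↥L, f x = f y → y ∈ S → x ∈ S := by
    intro x y hxy hyS
    have h1 : x⁻¹ * y ∈ K.subgroupOf L := QuotientGroup.eq.mp hxy
    have h2 : (x : G) ∈ B := by
      have : (x : G) = (y : G) * ((x⁻¹ * y : ↥L) : G)⁻¹ := by
        push_cast
        group
      rw [this]
      exact mul_mem hyS (inv_mem (hAB (hKA (Subgroup.mem_subgroupOf.mp h1))))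
    exact h2
  have qm := isQuotientMap_restrict QuotientGroup.continuous_mk
    (QuotientGroup.isOpenMap_coe) hsat (S := S)
  -- f '' S is closed, hence compact
  have hScl : IsClosed S := hBc.preimage continuous_subtype_val
  have hcompl : (f '' S)ᶜ = f '' Sᶜ := by
    ext q
    constructor
    · intro hq
      obtain ⟨x, rfl⟩ := QuotientGroup.mk_surjective q
      refine ⟨x, fun hxS => hq ⟨x, hxS, rfl⟩, rfl⟩
    · rintro ⟨x, hx, rfl⟩ ⟨s, hs, hfs⟩
      exact hx (hsat x s hfs.symm hs)
  have hTcl : IsClosed (f '' S) := by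
    rw [← isOpen_compl_iff, hcompl]
    exact QuotientGroup.isOpenMap_coe _ (hScl.isOpen_compl)
  have hTcpt : CompactSpace ↥(f '' S) := isCompact_iff_compactSpace.mp hTcl.isCompact
  -- the map down to the small quotient
  set h : ↥S → ↥B ⧸ A.subgroupOf B :=
    fun x => QuotientGroup.mk (⟨(x.1 : G), Subgroup.mem_subgroupOf.mp x.2⟩ : ↥B) with hh
  have hconst : ∀ x y : ↥S, (⟨f x, Set.mem_image_of_mem f x.2⟩ : f '' S) =
      ⟨f y, Set.mem_image_of_mem f y.2⟩ → h x = h y := by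
    intro x y hxy
    have h1 : (x.1)⁻¹ * y.1 ∈ K.subgroupOf L := QuotientGroup.eq.mp (congrArg Subtype.val hxy)
    apply (QuotientGroup.eq (s := A.subgroupOf B)).mpr
    have : ((x.1 : G))⁻¹ * (y.1 : G) ∈ K := h1
    exact Subgroup.mem_subgroupOf.mpr (hKA this)
  set g : ↥(f '' S) → ↥B ⧸ A.subgroupOf B :=
    h ∘ Function.surjInv qm.surjective with hg
  have hgr : g ∘ (fun x : S => (⟨f x, Set.mem_image_of_mem f x.2⟩ : f '' S)) = h := by
    funext x
    exact hconst _ x (Function.surjInv_eq qm.surjective _)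
  have hgc : Continuous g := by
    rw [qm.continuous_iff, hgr]
    exact QuotientGroup.continuous_mk.comp
      (Continuous.subtype_mk (continuous_subtype_val.comp continuous_subtype_val) _)
  have hgs : Function.Surjective g := by
    intro q
    obtain ⟨b, rfl⟩ := QuotientGroup.mk_surjective q
    refine ⟨⟨f ⟨(b : G), hBL b.2⟩, Set.mem_image_of_mem f (Subgroup.mem_subgroupOf.mpr b.2)⟩, ?_⟩
    have := congrFun hgr ⟨⟨(b : G), hBL b.2⟩, Subgroup.mem_subgroupOf.mpr b.2⟩
    simpa using this
  have : IsCompact (Set.range g) := isCompact_range hgc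
  rw [Set.range_eq_univ.mpr hgs] at this
  exact isCompact_univ_iff.mp this
end Topo

section Topo
variable {G : Type*} [Group G] [TopologicalSpace G] [IsTopologicalGroup G]

lemma discreteTopology_of_isOpen_one {H : Type*} [Group H] [TopologicalSpace H]
    [IsTopologicalGroup H] (h4 : IsOpen ({1} : Set H)) : DiscreteTopology H :=
  discreteTopology_iff_isOpen_singleton_one.mpr h4

lemma discrete_T {K B L : Subgroup G} (hKB : K ≤ B) (hBL : B ≤ L)
    [hN : (K.subgroupOf L).Normal] [hKB' : (K.subgroupOf B).Normal]
    (hd : DiscreteTopology (↥B ⧸ K.subgroupOf B)) :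
    DiscreteTopology ↥((B.subgroupOf L).map (QuotientGroup.mk' (K.subgroupOf L))) := by
  -- K.subgroupOf B is open in ↥B
  have h1 : IsOpen ((K.subgroupOf B : Set ↥B)) := by
    have h0 := (isOpen_discrete ({1} : Set (↥B ⧸ K.subgroupOf B))).preimage
      QuotientGroup.continuous_mk
    convert h0 using 1
    ext x
    simp only [Set.mem_preimage, Set.mem_singleton_iff, SetLike.mem_coe]
    rw [QuotientGroup.eq_one_iff]
  obtain ⟨U, hU, hUK⟩ := isOpen_induced_iff.mp h1
  apply discreteTopology_of_isOpen_one
  rw [isOpen_induced_iff]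
  refine ⟨QuotientGroup.mk '' (Subtype.val ⁻¹' U : Set ↥L),
    QuotientGroup.isOpenMap_coe _ (hU.preimage continuous_subtype_val), ?_⟩
  ext t
  simp only [Set.mem_preimage, Set.mem_singleton_iff]
  constructor
  · rintro ⟨x, hxU, hxt⟩
    obtain ⟨tv, htT⟩ := t
    obtain ⟨y, hyB, hyt⟩ := htT
    have hxt' : QuotientGroup.mk x = tv := hxt
    apply Subtype.ext
    show tv = ((1 : _) : ↥L ⧸ K.subgroupOf L)
    rw [← hxt']
    -- from mk y = mk x, deduce x ∈ B
    have hyx : y⁻¹ * x ∈ K.subgroupOf L := by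
      apply QuotientGroup.eq.mp
      show QuotientGroup.mk y = QuotientGroup.mk x
      rw [hxt']
      exact hyt
    have hxB : (x : G) ∈ B := by
      have : (x : G) = (y : G) * ((y⁻¹ * x : ↥L) : G) := by push_cast; group
      rw [this]
      exact mul_mem hyB (hKB (Subgroup.mem_subgroupOf.mp hyx))
    have hxK : (⟨(x : G), hxB⟩ : ↥B) ∈ K.subgroupOf B := by
      have hmem : (⟨(x : G), hxB⟩ : ↥B) ∈ Subtype.val ⁻¹' U := hxU
      rw [hUK] at hmem
      exact hmem
    rw [QuotientGroup.eq_one_iff]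
    exact Subgroup.mem_subgroupOf.mpr (Subgroup.mem_subgroupOf.mp hxK)
  · rintro rfl
    refine ⟨1, ?_, ?_⟩
    · show ((1 : ↥L) : G) ∈ U
      have h1U : ((1 : ↥B)) ∈ Subtype.val ⁻¹' U := by
        rw [hUK]; exact one_mem (K.subgroupOf B)
      simpa using h1U
    · simp
lemma discrete_big_of_discrete_T {C : Type*} [Group C] [TopologicalSpace C]
    [IsTopologicalGroup C] (T : Subgroup C) (d : ℕ) (hd : d ≠ 0) (hmem : ∀ x : C, x ^ d ∈ T)
    (htf : ∀ x : C, x ^ d = 1 → x = 1)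
    (hdisc : DiscreteTopology ↥T) : DiscreteTopology C := by
  apply discreteTopology_of_isOpen_one
  obtain ⟨U, hU, hUT⟩ := isOpen_induced_iff.mp (isOpen_discrete ({1} : Set ↥T))
  have hset : ({1} : Set C) = (fun x : C => x ^ d) ⁻¹' U := by
    ext x
    simp only [Set.mem_singleton_iff, Set.mem_preimage]
    constructor
    · rintro rfl
      have h1U : (1 : ↥T) ∈ Subtype.val ⁻¹' U := by rw [hUT]; rfl
      simpa using h1U
    · intro hx
      have : (⟨x ^ d, hmem x⟩ : ↥T) ∈ Subtype.val ⁻¹' U := hx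
      rw [hUT] at this
      exact htf x (congrArg Subtype.val this)
  rw [hset]
  exact hU.preimage (continuous_pow d)
end Topo

section Key
variable {G : Type*} [Group G] [TopologicalSpace G] [IsTopologicalGroup G]

lemma rho_ker {K B L : Subgroup G} (hBL : B ≤ L) [hN : (K.subgroupOf L).Normal] :
    ((QuotientGroup.mk' (K.subgroupOf L)).comp (Subgroup.inclusion hBL)).ker
      = K.subgroupOf B := by
  ext b
  simp only [MonoidHom.mem_ker, MonoidHom.comp_apply, QuotientGroup.mk'_apply]
  rw [QuotientGroup.eq_one_iff]
  rfl

lemma rho_range {K B L : Subgroup G} (hBL : B ≤ L) [hN : (K.subgroupOf L).Normal] :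
    ((QuotientGroup.mk' (K.subgroupOf L)).comp (Subgroup.inclusion hBL)).range
      = (B.subgroupOf L).map (QuotientGroup.mk' (K.subgroupOf L)) := by
  ext t
  simp only [MonoidHom.mem_range, MonoidHom.comp_apply, Subgroup.mem_map]
  constructor
  · rintro ⟨b, rfl⟩
    exact ⟨Subgroup.inclusion hBL b, Subgroup.mem_subgroupOf.mpr b.2, rfl⟩
  · rintro ⟨y, hy, rfl⟩
    exact ⟨⟨(y : G), Subgroup.mem_subgroupOf.mp hy⟩, rfl⟩

lemma rho_comap {K A B L : Subgroup G} (hKA : K ≤ A) (hAB : A ≤ B) (hBL : B ≤ L)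
    [hN : (K.subgroupOf L).Normal] :
    ((A.subgroupOf L).map (QuotientGroup.mk' (K.subgroupOf L))).comap
      ((QuotientGroup.mk' (K.subgroupOf L)).comp (Subgroup.inclusion hBL))
      = A.subgroupOf B := by
  ext b
  simp only [Subgroup.mem_comap, MonoidHom.comp_apply, Subgroup.mem_map,
    QuotientGroup.mk'_apply]
  constructor
  · rintro ⟨y, hy, hyb⟩
    have h1 : y⁻¹ * Subgroup.inclusion hBL b ∈ K.subgroupOf L := QuotientGroup.eq.mp hyb
    have : (b : G) = (y : G) * ((y⁻¹ * Subgroup.inclusion hBL b : ↥L) : G) := by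
      push_cast
      simp [Subgroup.coe_inclusion]
    have hbA : (b : G) ∈ A := by
      rw [this]
      exact mul_mem (Subgroup.mem_subgroupOf.mp hy) (hKA (Subgroup.mem_subgroupOf.mp h1))
    exact Subgroup.mem_subgroupOf.mpr hbA
  · intro hb
    refine ⟨Subgroup.inclusion hBL b, Subgroup.mem_subgroupOf.mpr ?_, rfl⟩
    rw [Subgroup.coe_inclusion]
    exact Subgroup.mem_subgroupOf.mp hb
end Key
section KeyMain
variable {G : Type*} [Group G] [TopologicalSpace G] [IsTopologicalGroup G]

lemma key_main {K A B L : Subgroup G} (hKA : K ≤ A) (hAB : A ≤ B) (hBL : B ≤ L)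
    (hBc : IsClosed (B : Set G))
    [hN : (K.subgroupOf L).Normal] [hA' : (A.subgroupOf B).Normal]
    (hcc : IsCyclic (↥L ⧸ K.subgroupOf L) ∨ CompactSpace (↥L ⧸ K.subgroupOf L))
    (hdisc : DiscreteTopology (↥B ⧸ A.subgroupOf B))
    (hiso : Nonempty ((↥B ⧸ A.subgroupOf B) ≃* Multiplicative ℤ)) :
    A = K ∧ DiscreteTopology (↥L ⧸ K.subgroupOf L) ∧
      Nonempty ((↥L ⧸ K.subgroupOf L) ≃* Multiplicative ℤ) := by
  obtain ⟨e⟩ := hiso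
  have hQinf : Infinite (↥B ⧸ A.subgroupOf B) := (Equiv.infinite_iff e.toEquiv).mpr inferInstance
  rcases hcc with hcy | hcpt
  swap
  · -- compact case: contradiction
    haveI := compact_of_compact_big hKA hAB hBL hBc hcpt
    haveI := hdisc
    have : Finite (↥B ⧸ A.subgroupOf B) := finite_of_compact_of_discrete
    exact absurd this (by rw [← not_infinite_iff_finite] at this ⊢; exact fun h => h hQinf)
  -- cyclic case
  set ρ : ↥B →* ↥L ⧸ K.subgroupOf L :=
    (QuotientGroup.mk' (K.subgroupOf L)).comp (Subgroup.inclusion hBL) with hρ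
  set T : Subgroup (↥L ⧸ K.subgroupOf L) :=
    (B.subgroupOf L).map (QuotientGroup.mk' (K.subgroupOf L)) with hT
  set TA : Subgroup (↥L ⧸ K.subgroupOf L) :=
    (A.subgroupOf L).map (QuotientGroup.mk' (K.subgroupOf L)) with hTA
  have hTAT : TA ≤ T := Subgroup.map_mono (fun x hx =>
    Subgroup.mem_subgroupOf.mpr (hAB (Subgroup.mem_subgroupOf.mp hx)))
  have hcard : Nat.card (↥B ⧸ A.subgroupOf B) = TA.relIndex T := by
    rw [← Subgroup.index_eq_card, ← rho_comap hKA hAB hBL, Subgroup.index_comap,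
      rho_range hBL]
  have hcard0 : TA.relIndex T = 0 := by
    rw [← hcard]
    exact Nat.card_eq_zero_of_infinite
  -- C is infinite
  have hCinf : Infinite (↥L ⧸ K.subgroupOf L) := by
    by_contra hfin
    rw [not_infinite_iff_finite] at hfin
    haveI := hfin
    haveI : Finite ↥T := Subtype.finite
    have : TA.relIndex T ≠ 0 := by
      rw [Subgroup.relIndex]
      rw [Subgroup.index_eq_card]
      refine Nat.card_ne_zero.mpr ⟨inferInstance, ?_⟩
      exact Quotient.finite _
    exact this hcard0
  haveI := hcy
  haveI := hCinf
  obtain ⟨ξ⟩ := icc (C := ↥L ⧸ K.subgroupOf L)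
  -- TA = ⊥
  have hTAbot : TA = ⊥ := by
    by_contra hne
    exact zfact_relindex_ne_zero ξ hTAT hne hcard0
  -- A = K
  have hAK : A = K := by
    refine le_antisymm ?_ hKA
    intro a ha
    have hmem : (QuotientGroup.mk' (K.subgroupOf L)) ⟨a, hBL (hAB ha)⟩ ∈ TA :=
      Subgroup.mem_map_of_mem _ (Subgroup.mem_subgroupOf.mpr ha)
    rw [hTAbot, Subgroup.mem_bot] at hmem
    have : (⟨a, hBL (hAB ha)⟩ : ↥L) ∈ K.subgroupOf L := by
      rw [← QuotientGroup.eq_one_iff]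
      exact hmem
    exact Subgroup.mem_subgroupOf.mp this
  -- T ≠ ⊥
  have hTne : T ≠ ⊥ := by
    intro hTbot
    -- then B ≤ K, so Q is subsingleton, contradiction with Infinite Q
    have hBK : B ≤ K := by
      intro b hb
      have hmem : (QuotientGroup.mk' (K.subgroupOf L)) ⟨b, hBL hb⟩ ∈ T :=
        Subgroup.mem_map_of_mem _ (Subgroup.mem_subgroupOf.mpr hb)
      rw [hTbot, Subgroup.mem_bot] at hmem
      have : (⟨b, hBL hb⟩ : ↥L) ∈ K.subgroupOf L := by
        rw [← QuotientGroup.eq_one_iff]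
        exact hmem
      exact Subgroup.mem_subgroupOf.mp this
    have : Subsingleton (↥B ⧸ A.subgroupOf B) := by
      constructor
      intro x y
      obtain ⟨bx, rfl⟩ := QuotientGroup.mk_surjective x
      obtain ⟨by', rfl⟩ := QuotientGroup.mk_surjective y
      apply QuotientGroup.eq.mpr
      exact Subgroup.mem_subgroupOf.mpr (hKA (hBK (mul_mem (inv_mem bx.2) by'.2)))
    exact absurd this (not_subsingleton _)
  -- C is a ℤ-group: now get discreteness
  haveI : T.Normal := ⟨fun n hn g => by
    have hc := zfact_comm ξ g n
    have : g * n * g⁻¹ = n := by rw [hc, mul_assoc, mul_inv_cancel, mul_one]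
    rw [this]
    exact hn⟩
  have hidx : T.index ≠ 0 := zfact_index_ne_zero ξ hTne
  haveI : T.FiniteIndex := ⟨hidx⟩
  have hmem : ∀ x : ↥L ⧸ K.subgroupOf L, x ^ T.index ∈ T :=
    fun x => Subgroup.pow_index_mem T x
  have hKB' : (K.subgroupOf B).Normal := by rw [← hAK]; exact hA'
  have hdQ : DiscreteTopology (↥B ⧸ K.subgroupOf B) := hAK ▸ hdisc
  haveI := hKB'
  have hdiscT : DiscreteTopology ↥T := discrete_T (hKA.trans hAB) hBL hdQ
  have hdC : DiscreteTopology (↥L ⧸ K.subgroupOf L) :=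
    discrete_big_of_discrete_T T T.index hidx hmem
      (fun x hx => zfact_torsionfree ξ hidx hx) hdiscT
  exact ⟨hAK, hdC, ⟨ξ⟩⟩

lemma key_surj {K B L : Subgroup G} (hKB : K ≤ B) (hBL : B ≤ L)
    [hN : (K.subgroupOf L).Normal] [hKB' : (K.subgroupOf B).Normal]
    (hdC : DiscreteTopology (↥L ⧸ K.subgroupOf L))
    (ψ : (↥L ⧸ K.subgroupOf L) ≃* Multiplicative ℤ)
    (hnB : ¬ B ≤ K) :
    DiscreteTopology (↥B ⧸ K.subgroupOf B) ∧
      Nonempty ((↥B ⧸ K.subgroupOf B) ≃* Multiplicative ℤ) := by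
  constructor
  · exact discrete_of_discrete_big le_rfl hKB hBL hdC
  · set ρ : ↥B →* ↥L ⧸ K.subgroupOf L :=
      (QuotientGroup.mk' (K.subgroupOf L)).comp (Subgroup.inclusion hBL) with hρ
    have e1 : (↥B ⧸ K.subgroupOf B) ≃* ↥ρ.range :=
      (QuotientGroup.quotientMulEquivOfEq (rho_ker hBL)).symm.trans
        (QuotientGroup.quotientKerEquivRange ρ)
    have hrne : ρ.range ≠ ⊥ := by
      intro hbot
      have hex : ∃ b, b ∈ B ∧ b ∉ K := by
        by_contra hall
        push_neg at hall
        exact hnB fun b hb => hall b hb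
      obtain ⟨b, hbB, hbK⟩ := hex
      have hmr : ρ ⟨b, hbB⟩ ∈ ρ.range := ⟨⟨b, hbB⟩, rfl⟩
      rw [hbot, Subgroup.mem_bot] at hmr
      have hk : (⟨b, hbB⟩ : ↥B) ∈ ρ.ker := hmr
      rw [rho_ker hBL] at hk
      exact hbK (Subgroup.mem_subgroupOf.mp hk)
    obtain ⟨e2⟩ := zfact_subgroup_iso ψ hrne
    exact ⟨e1.trans e2⟩
end KeyMain

end ZFacts
end AuxHirsch

section AuxHirsch2
open Subgroup Topology
section NonTriv
variable {G : Type*} [Group G] [TopologicalSpace G] [IsTopologicalGroup G]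

lemma factor_nontrivial {A B : Subgroup G} (hAB : A ≤ B) [h' : (A.subgroupOf B).Normal]
    (hiso : Nonempty ((↥B ⧸ A.subgroupOf B) ≃* Multiplicative ℤ)) : ¬ B ≤ A := by
  intro hBA
  obtain ⟨e⟩ := hiso
  have hsub : Subsingleton (↥B ⧸ A.subgroupOf B) := by
    constructor
    intro x y
    obtain ⟨bx, rfl⟩ := QuotientGroup.mk_surjective x
    obtain ⟨by', rfl⟩ := QuotientGroup.mk_surjective y
    apply QuotientGroup.eq.mpr
    exact Subgroup.mem_subgroupOf.mpr (hBA (mul_mem (inv_mem bx.2) by'.2))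
  have : Subsingleton (Multiplicative ℤ) := e.symm.toEquiv.subsingleton
  exact false_of_nontrivial_of_subsingleton (Multiplicative ℤ)
lemma transport_disc {A A' B : Subgroup G} (hAA : A = A')
    (hd : DiscreteTopology (↥B ⧸ A'.subgroupOf B)) :
    DiscreteTopology (↥B ⧸ A.subgroupOf B) := by subst hAA; exact hd

lemma transport_iso {A A' B : Subgroup G} (hAA : A = A') [hn : (A.subgroupOf B).Normal]
    [hn' : (A'.subgroupOf B).Normal]
    (hi : Nonempty ((↥B ⧸ A'.subgroupOf B) ≃* Multiplicative ℤ)) :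
    Nonempty ((↥B ⧸ A.subgroupOf B) ≃* Multiplicative ℤ) := by subst hAA; exact hi
end NonTriv

end AuxHirsch2

/-- Let `G` be a topological group with a normal series
`1 = G₀ ⊴ G₁ ⊴ ⋯ ⊴ Gₙ = G` of closed subgroups whose factors are each either cyclic or
compact.  Then any refinement of this series by closed normal subgroups has the same
number of infinite cyclic factors as the original series. -/
theorem zCount_refinement_eq
    {G : Type*} [Group G] [TopologicalSpace G] [IsTopologicalGroup G]
    {n : ℕ} (c : Fin (n + 1) → Subgroup G) (hc : IsClosedSeries c)
    (hfac : ∀ i : Fin n, IsCyclicFactor c i ∨ IsCompactFactor c i)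
    {m : ℕ} (c' : Fin (m + 1) → Subgroup G) (hc' : IsClosedSeries c')
    (φ : Fin (n + 1) → Fin (m + 1)) (hφ : StrictMono φ) (href : ∀ i, c' (φ i) = c i) :
    zCount c' = zCount c := by
  classical
  -- monotonicity of c'
  have hmono : Monotone c' := by
    have H : ∀ k : ℕ, ∀ p q : Fin (m+1), q.1 = p.1 + k → c' p ≤ c' q := by
      intro k
      induction k with
      | zero =>
        intro p q h
        have : p = q := Fin.ext (by omega)
        rw [this]
      | succ k ih =>
        intro p q h
        have hq : q.1 - 1 < m := by omega
        have hqq : q = (⟨q.1-1, hq⟩ : Fin m).succ := Fin.ext (by simp; omega)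
        calc c' p ≤ c' (⟨q.1-1, hq⟩ : Fin m).castSucc := ih p _ (by simp; omega)
        _ ≤ c' q := by
          have hstep := hc'.le (⟨q.1-1, hq⟩ : Fin m)
          rwa [← hqq] at hstep
    intro p q hpq
    exact H (q.1 - p.1) p q (by have := Fin.le_def.mp hpq; omega)
  -- uniqueness of blocks
  have huniq : ∀ (i i' : Fin n) (j : Fin m),
      φ i.castSucc ≤ j.castSucc → j.succ ≤ φ i.succ →
      φ i'.castSucc ≤ j.castSucc → j.succ ≤ φ i'.succ → i = i' := by
    have main : ∀ (i i' : Fin n) (j : Fin m), i < i' →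
        j.succ ≤ φ i.succ → φ i'.castSucc ≤ j.castSucc → False := by
      intro i i' j hii h2 h1'
      have hss : (i.succ : Fin (n+1)) ≤ i'.castSucc := by
        rw [Fin.le_def]
        simp only [Fin.val_succ, Fin.coe_castSucc]
        exact Fin.lt_def.mp hii
      have := le_trans (Fin.le_def.mp h2) (le_trans (Fin.le_def.mp (hφ.monotone hss))
        (Fin.le_def.mp h1'))
      simp at this
    intro i i' j h1 h2 h1' h2'
    by_contra hne
    rcases lt_or_gt_of_ne hne with h | h
    · exact main i i' j h h2 h1'
    · exact main i' i j h h2' h1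
  -- the per-factor key step
  have hkey : ∀ (i : Fin n) (j : Fin m), φ i.castSucc ≤ j.castSucc → j.succ ≤ φ i.succ →
      IsZFactor c' j → c' j.castSucc = c i.castSucc ∧ IsZFactor c i := by
    intro i j h1 h2 hZ
    obtain ⟨hnor, hdisc, hiso⟩ := hZ
    haveI := hc.normal i
    haveI := hc'.normal j
    have hKA : c i.castSucc ≤ c' j.castSucc := by
      rw [← href i.castSucc]; exact hmono h1
    have hBL : c' j.succ ≤ c i.succ := by
      rw [← href i.succ]; exact hmono h2
    have hcc : IsCyclic (↥(c i.succ) ⧸ (c i.castSucc).subgroupOf (c i.succ)) ∨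
        CompactSpace (↥(c i.succ) ⧸ (c i.castSucc).subgroupOf (c i.succ)) := by
      rcases hfac i with ⟨_, hcy⟩ | hcpt
      · exact Or.inl hcy
      · exact Or.inr hcpt
    have hres := key_main hKA (hc'.le j) hBL (hc'.closed j.succ) hcc hdisc hiso
    exact ⟨hres.1, ⟨hc.normal i, hres.2.1, hres.2.2⟩⟩
  -- block existence
  have hblock : ∀ j : Fin m, IsZFactor c' j →
      ∃ i : Fin n, φ i.castSucc ≤ j.castSucc ∧ j.succ ≤ φ i.succ := by
    intro j hZ
    obtain ⟨hnor, hdisc, hiso⟩ := hZ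
    haveI := hc'.normal j
    have hnt : ¬ c' j.succ ≤ c' j.castSucc := factor_nontrivial (hc'.le j) hiso
    have h00 : φ 0 ≤ j.castSucc := by
      by_contra h
      have h' : j.succ ≤ φ 0 := by
        rw [Fin.le_def]
        have := Fin.le_def.not.mp h
        simp only [Fin.val_succ, Fin.coe_castSucc] at this ⊢
        omega
      have hB : c' j.succ ≤ c' (φ 0) := hmono h'
      rw [href 0, hc.bot] at hB
      exact hnt (le_trans hB bot_le)
    have hlast : ¬ φ (Fin.last n) ≤ j.castSucc := by
      intro h
      have hA : (⊤ : Subgroup G) ≤ c' j.castSucc := by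
        rw [← hc.top, ← href (Fin.last n)]
        exact hmono h
      exact hnt (le_trans le_top hA)
    set S : Finset (Fin (n+1)) := Finset.univ.filter (fun p => φ p ≤ j.castSucc) with hS
    have h0S : (0 : Fin (n+1)) ∈ S := by simp [hS, h00]
    set i₀ := S.max' ⟨0, h0S⟩ with hi₀
    have hi₀S : i₀ ∈ S := S.max'_mem _
    have hi₀le : φ i₀ ≤ j.castSucc := by
      have := Finset.mem_filter.mp hi₀S
      exact this.2
    have hi₀lt : i₀.1 < n := by
      rcases Nat.lt_or_ge i₀.1 n with h | h
      · exact h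
      · exfalso
        have : i₀ = Fin.last n := Fin.ext (by simp [Fin.last]; omega)
        exact hlast (this ▸ hi₀le)
    refine ⟨⟨i₀.1, hi₀lt⟩, ?_, ?_⟩
    · have : (⟨i₀.1, hi₀lt⟩ : Fin n).castSucc = i₀ := Fin.ext rfl
      rw [this]
      exact hi₀le
    · by_contra h
      have hmemS : (⟨i₀.1, hi₀lt⟩ : Fin n).succ ∈ S := by
        simp only [hS, Finset.mem_filter, Finset.mem_univ, true_and]
        rw [Fin.le_def]
        have hnn := Fin.le_def.not.mp h
        simp only [Fin.val_succ, Fin.coe_castSucc] at hnn ⊢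
        omega
      have hle := S.le_max' _ hmemS
      rw [← hi₀] at hle
      have hv := Fin.le_def.mp hle
      simp only [Fin.val_succ] at hv
      omega
  -- surjectivity input
  have hsurjx : ∀ i : Fin n, IsZFactor c i → ∃ j : Fin m,
      (φ i.castSucc ≤ j.castSucc ∧ j.succ ≤ φ i.succ) ∧ IsZFactor c' j := by
    intro i hZ
    obtain ⟨hnor, hdC, hψ⟩ := hZ
    obtain ⟨ψ⟩ := hψ
    haveI := hc.normal i
    have hKneq : ¬ c i.succ ≤ c i.castSucc := factor_nontrivial (hc.le i) ⟨ψ⟩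
    set S : Finset (Fin (m+1)) := Finset.univ.filter (fun p => ¬ c' p ≤ c i.castSucc) with hS
    have hSne : (φ i.succ) ∈ S := by
      simp only [hS, Finset.mem_filter, Finset.mem_univ, true_and]
      rw [href i.succ]
      exact hKneq
    set p₀ := S.min' ⟨_, hSne⟩ with hp₀def
    have hp₀S : p₀ ∈ S := S.min'_mem _
    have hp₀ : ¬ c' p₀ ≤ c i.castSucc := (Finset.mem_filter.mp hp₀S).2
    have hp₀le : p₀ ≤ φ i.succ := S.min'_le _ hSne
    have hp₀pos : p₀.1 ≠ 0 := by
      intro h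
      apply hp₀
      have : p₀ = 0 := Fin.ext h
      rw [this, hc'.bot]
      exact bot_le
    have hjlt : p₀.1 - 1 < m := by have := p₀.2; omega
    set j : Fin m := ⟨p₀.1 - 1, hjlt⟩ with hjdef
    have hjsucc : j.succ = p₀ := Fin.ext (by simp [hjdef]; omega)
    have hjK : c' j.castSucc ≤ c i.castSucc := by
      by_contra h
      have hmem : j.castSucc ∈ S := by
        simp only [hS, Finset.mem_filter, Finset.mem_univ, true_and]
        exact h
      have := S.min'_le _ hmem
      rw [← hp₀def] at this
      have hv := Fin.le_def.mp this
      simp only [Fin.coe_castSucc, hjdef] at hv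
      omega
    have h1 : φ i.castSucc ≤ j.castSucc := by
      by_contra h
      have hple : p₀ ≤ φ i.castSucc := by
        rw [← hjsucc]
        rw [Fin.le_def]
        have hnn := Fin.le_def.not.mp h
        simp only [Fin.val_succ, Fin.coe_castSucc, hjdef] at hnn ⊢
        omega
      apply hp₀
      calc c' p₀ ≤ c' (φ i.castSucc) := hmono hple
      _ = c i.castSucc := href i.castSucc
    have h2 : j.succ ≤ φ i.succ := hjsucc ▸ hp₀le
    have hAK : c' j.castSucc = c i.castSucc := by
      refine le_antisymm hjK ?_
      rw [← href i.castSucc]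
      exact hmono h1
    haveI := hc'.normal j
    have hKB : c i.castSucc ≤ c' j.succ := hAK ▸ hc'.le j
    have hBL : c' j.succ ≤ c i.succ := by rw [← href i.succ]; exact hmono h2
    haveI hKB'n : ((c i.castSucc).subgroupOf (c' j.succ)).Normal := by
      rw [← hAK]; exact hc'.normal j
    have hnB : ¬ c' j.succ ≤ c i.castSucc := by
      rw [hjsucc]
      exact hp₀
    have hres := key_surj hKB hBL hdC ψ hnB
    exact ⟨j, ⟨h1, h2⟩, ⟨hc'.normal j, transport_disc hAK hres.1, transport_iso hAK hres.2⟩⟩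
  -- assemble the bijection
  have hchoice : ∀ j : {j : Fin m // IsZFactor c' j}, ∃ i : Fin n,
      (φ i.castSucc ≤ (j : Fin m).castSucc ∧ (j : Fin m).succ ≤ φ i.succ) :=
    fun j => hblock j j.2
  choose F hF using hchoice
  have hFZ : ∀ j, IsZFactor c (F j) := fun j => (hkey _ _ (hF j).1 (hF j).2 j.2).2
  set e : {j : Fin m // IsZFactor c' j} → {i : Fin n // IsZFactor c i} :=
    fun j => ⟨F j, hFZ j⟩ with he
  have hinj : Function.Injective e := by
    have main : ∀ (a b : {j : Fin m // IsZFactor c' j}), (a : Fin m) < (b : Fin m) →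
        F a = F b → False := by
      intro a b hab hFab
      have h1 := (hkey _ _ (hF b).1 (hF b).2 b.2).1
      have h1a := (hkey _ _ (hF a).1 (hF a).2 a.2).1
      have hBA : c' (a : Fin m).succ ≤ c' (a : Fin m).castSucc := by
        have hstep : (a : Fin m).succ ≤ (b : Fin m).castSucc := by
          rw [Fin.le_def]
          simp only [Fin.val_succ, Fin.coe_castSucc]
          exact Fin.lt_def.mp hab
        calc c' (a : Fin m).succ ≤ c' (b : Fin m).castSucc := hmono hstep
        _ = c (F b).castSucc := h1
        _ = c (F a).castSucc := by rw [hFab]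
        _ = c' (a : Fin m).castSucc := h1a.symm
      obtain ⟨hn', hd', hiso'⟩ := a.2
      haveI := hc'.normal (a : Fin m)
      exact factor_nontrivial (hc'.le (a : Fin m)) hiso' hBA
    intro a b heq
    have hi : F a = F b := congrArg Subtype.val heq
    by_contra hne
    have hne' : (a : Fin m) ≠ (b : Fin m) := fun h => hne (Subtype.ext h)
    rcases lt_or_gt_of_ne hne' with h | h
    · exact main a b h hi
    · exact main b a h hi.symm
  have hsur : Function.Surjective e := by
    intro i
    obtain ⟨j, ⟨h1, h2⟩, hZ⟩ := hsurjx i i.2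
    refine ⟨⟨j, hZ⟩, Subtype.ext ?_⟩
    exact huniq (F ⟨j, hZ⟩) i j (hF ⟨j, hZ⟩).1 (hF ⟨j, hZ⟩).2 h1 h2
  unfold zCount
  exact Nat.card_eq_of_bijective e ⟨hinj, hsur⟩
end

section
/- Let 1 → N → G → K → 1 be a short exact sequence of locally compact, compactly generated groups with N compact or cocompact. Then asdim(G) ≤ asdim(N) + asdim(K). If moreover the sequence splits topologically and N is locally elliptic, then asdim(G) = asdim(K). -/
/-- `ASDimLE d n`: with respect to the distance function `d`, the asymptotic dimension is
at most `n`.  For every `r > 0` there is a uniformly bounded cover such that every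
`r`-ball meets at most `n + 1` members of the cover. -/
def ASDimLE {X : Type*} (d : X → X → ℝ) (n : ℕ) : Prop :=
  ∀ r : ℝ, 0 < r → ∃ (U : Set (Set X)) (D : ℝ),
    (∀ x : X, ∃ u ∈ U, x ∈ u) ∧
    (∀ u ∈ U, ∀ x ∈ u, ∀ y ∈ u, d x y ≤ D) ∧
    (∀ x : X, {u | u ∈ U ∧ ∃ y ∈ u, d x y < r}.Finite ∧
      Nat.card {u // u ∈ U ∧ ∃ y ∈ u, d x y < r} ≤ n + 1)

/-- The asymptotic dimension (in `ℕ∞`) of `X` with respect to the distance function `d`. -/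
noncomputable def asDim {X : Type*} (d : X → X → ℝ) : ℕ∞ :=
  sInf ((fun n : ℕ => (n : ℕ∞)) '' {n : ℕ | ASDimLE d n})

/-- An adapted (plig) metric on a topological group: a proper, left-invariant metric
generating the topology. -/
structure IsAdaptedMetric (G : Type*) [Group G] [TopologicalSpace G] (d : G → G → ℝ) : Prop where
  self : ∀ x, d x x = 0
  pos : ∀ x y, x ≠ y → 0 < d x y
  symm : ∀ x y, d x y = d y x
  triangle : ∀ x y z, d x z ≤ d x y + d y z
  leftInvariant : ∀ g x y, d (g * x) (g * y) = d x y
  proper : ∀ x r, IsCompact {y | d x y ≤ r}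
  compatible : ∀ s : Set G, IsOpen s ↔ ∀ x ∈ s, ∃ ε > 0, {y | d x y < ε} ⊆ s

/-- A locally compact group is locally elliptic if every compact subset is contained in a
compact open subgroup. -/
def LocallyElliptic (X : Type*) [Group X] [TopologicalSpace X] : Prop :=
  ∀ K : Set X, IsCompact K → ∃ U : Subgroup X,
    IsCompact (U : Set X) ∧ IsOpen (U : Set X) ∧ K ⊆ (U : Set X)

section Aux
variable {H : Type*} [Group H] [TopologicalSpace H] {d : H → H → ℝ}

lemma IsAdaptedMetric.nonneg (hd : IsAdaptedMetric H d) (x y : H) : 0 ≤ d x y := by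
  have h := hd.triangle x y x
  rw [hd.self, hd.symm y x] at h; linarith

lemma IsAdaptedMetric.dist_eq (hd : IsAdaptedMetric H d) (x y : H) : d x y = d 1 (x⁻¹ * y) := by
  have h := hd.leftInvariant x⁻¹ x y
  rw [inv_mul_cancel] at h; exact h.symm

lemma IsAdaptedMetric.isOpen_ball (hd : IsAdaptedMetric H d) (x : H) (r : ℝ) :
    IsOpen {y | d x y < r} := by
  rw [hd.compatible]
  intro z hz
  refine ⟨r - d x z, by simpa using hz, fun y hy => ?_⟩
  have h := hd.triangle x z y
  simp only [Set.mem_setOf_eq] at *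
  linarith

lemma IsAdaptedMetric.isClosed_ball (hd : IsAdaptedMetric H d) (x : H) (r : ℝ) :
    IsClosed {y | d x y ≤ r} := by
  rw [← isOpen_compl_iff, hd.compatible]
  intro z hz
  simp only [Set.mem_compl_iff, Set.mem_setOf_eq, not_le] at hz
  refine ⟨d x z - r, by linarith, fun y hy => ?_⟩
  have h := hd.triangle x y z
  rw [hd.symm y z] at h
  simp only [Set.mem_setOf_eq] at hy
  simp only [Set.mem_compl_iff, Set.mem_setOf_eq, not_le]
  linarith

lemma IsAdaptedMetric.exists_bound (hd : IsAdaptedMetric H d) {C : Set H} (hC : IsCompact C) :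
    ∃ M : ℝ, 0 ≤ M ∧ ∀ x ∈ C, d 1 x ≤ M := by
  obtain ⟨t, ht⟩ := hC.elim_finite_subcover (fun n : ℕ => {y | d 1 y < n})
    (fun n => hd.isOpen_ball 1 n) (fun x _ => Set.mem_iUnion.2 ⟨⌈d 1 x⌉₊ + 1, by
      simp only [Set.mem_setOf_eq]
      have h := Nat.le_ceil (d 1 x); push_cast; linarith⟩)
  refine ⟨(t.sup id : ℕ), Nat.cast_nonneg _, fun x hx => ?_⟩
  obtain ⟨n, hn, hxn⟩ := Set.mem_iUnion₂.1 (ht hx)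
  calc d 1 x ≤ n := le_of_lt hxn
  _ ≤ ((t.sup id : ℕ) : ℝ) := by exact_mod_cast Finset.le_sup (f := id) hn

end Aux


section Coarse
variable {H K' : Type*} [Group H] [TopologicalSpace H] [Group K'] [TopologicalSpace K']
  {dH : H → H → ℝ} {dK : K' → K' → ℝ}

lemma coarse_forward (hdH : IsAdaptedMetric H dH) (hdK : IsAdaptedMetric K' dK)
    (f : H →* K') (hf : Continuous f) (R : ℝ) :
    ∃ S : ℝ, ∀ x y : H, dH x y ≤ R → dK (f x) (f y) ≤ S := by
  obtain ⟨M, -, hM⟩ := hdK.exists_bound ((hdH.proper 1 R).image hf)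
  refine ⟨M, fun x y hxy => ?_⟩
  rw [hdK.dist_eq, ← map_inv, ← map_mul]
  exact hM _ ⟨x⁻¹ * y, by rwa [Set.mem_setOf_eq, ← hdH.dist_eq], rfl⟩

lemma coarse_backward (hdH : IsAdaptedMetric H dH) (hdK : IsAdaptedMetric K' dK)
    (f : H →* K') (hprop : ∀ R : ℝ, IsCompact (⇑f ⁻¹' {y | dK 1 y ≤ R})) (R : ℝ) :
    ∃ S : ℝ, ∀ x y : H, dK (f x) (f y) ≤ R → dH x y ≤ S := by
  obtain ⟨M, -, hM⟩ := hdH.exists_bound (hprop R)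
  refine ⟨M, fun x y hxy => ?_⟩
  rw [hdH.dist_eq]
  refine hM _ ?_
  rw [Set.mem_preimage, Set.mem_setOf_eq, map_mul, map_inv, ← hdK.dist_eq]
  exact hxy

end Coarse

lemma ASDimLE.pullback {X Y : Type*} {dX : X → X → ℝ} {dY : Y → Y → ℝ} {n : ℕ} (f : X → Y)
    (h1 : ∀ R : ℝ, 0 < R → ∃ S : ℝ, 0 < S ∧ ∀ x y, dX x y < R → dY (f x) (f y) < S)
    (h2 : ∀ D : ℝ, ∃ E : ℝ, ∀ x y, dY (f x) (f y) ≤ D → dX x y ≤ E)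
    (h : ASDimLE dY n) : ASDimLE dX n := by
  intro r hr
  obtain ⟨S, hS, hSf⟩ := h1 r hr
  obtain ⟨U', D', hcov, hbd, hmul⟩ := h S hS
  obtain ⟨E, hE⟩ := h2 D'
  refine ⟨(fun u => f ⁻¹' u) '' U', E, ?_, ?_, ?_⟩
  · intro x
    obtain ⟨u', hu', hx⟩ := hcov (f x)
    exact ⟨f ⁻¹' u', ⟨u', hu', rfl⟩, hx⟩
  · rintro u ⟨u', hu', rfl⟩ x hx y hy
    exact hE x y (hbd u' hu' _ hx _ hy)
  · intro x
    have hsub : {u | u ∈ (fun u => f ⁻¹' u) '' U' ∧ ∃ y ∈ u, dX x y < r} ⊆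
        (fun u => f ⁻¹' u) '' {u' | u' ∈ U' ∧ ∃ y' ∈ u', dY (f x) y' < S} := by
      rintro u ⟨⟨u', hu', rfl⟩, y, hy, hxy⟩
      exact ⟨u', ⟨hu', f y, hy, hSf x y hxy⟩, rfl⟩
    have hfinB := (hmul (f x)).1
    refine ⟨(hfinB.image _).subset hsub, ?_⟩
    calc Nat.card {u // u ∈ (fun u => f ⁻¹' u) '' U' ∧ ∃ y ∈ u, dX x y < r}
        ≤ Nat.card ((fun u => f ⁻¹' u) '' {u' | u' ∈ U' ∧ ∃ y' ∈ u', dY (f x) y' < S}) :=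
          Nat.card_mono (hfinB.image _).to_subtype hsub
      _ ≤ Nat.card {u' | u' ∈ U' ∧ ∃ y' ∈ u', dY (f x) y' < S} := Nat.card_image_le hfinB
      _ ≤ n + 1 := (hmul (f x)).2

lemma asDim_le_asDim {X Y : Type*} {dX : X → X → ℝ} {dY : Y → Y → ℝ}
    (h : ∀ n : ℕ, ASDimLE dY n → ASDimLE dX n) : asDim dX ≤ asDim dY :=
  sInf_le_sInf (by rintro _ ⟨n, hn, rfl⟩; exact ⟨n, h n hn, rfl⟩)

lemma asDim_eq_zero {X : Type*} {dX : X → X → ℝ} (h : ASDimLE dX 0) : asDim dX = 0 :=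
  le_antisymm (sInf_le ⟨0, h, rfl⟩) zero_le

lemma LocallyElliptic.asDimLE_zero {H : Type*} [Group H] [TopologicalSpace H]
    {d : H → H → ℝ} (hd : IsAdaptedMetric H d) (hLE : LocallyElliptic H) : ASDimLE d 0 := by
  intro r hr
  obtain ⟨U₀, hU₀c, -, hU₀sub⟩ := hLE {y | d 1 y ≤ r} (hd.proper 1 r)
  obtain ⟨M, -, hM⟩ := hd.exists_bound hU₀c
  refine ⟨Set.range (fun g : H => (g * ·) '' (U₀ : Set H)), M, ?_, ?_, ?_⟩
  · exact fun x => ⟨(x * ·) '' U₀, ⟨x, rfl⟩, ⟨1, U₀.one_mem, mul_one x⟩⟩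
  · rintro _ ⟨g, rfl⟩ _ ⟨a, ha, rfl⟩ _ ⟨b, hb, rfl⟩
    simp only
    rw [hd.dist_eq]
    have : (g * a)⁻¹ * (g * b) = a⁻¹ * b := by group
    rw [this]
    exact hM _ (U₀.mul_mem (U₀.inv_mem ha) hb)
  · intro x
    have hcoset : ∀ g a, a ∈ U₀ → x⁻¹ * (g * a) ∈ U₀ →
        (g * ·) '' (U₀ : Set H) = (x * ·) '' (U₀ : Set H) := by
      intro g a ha hxga
      have hu₁ : x⁻¹ * g ∈ U₀ := by
        have : x⁻¹ * g = (x⁻¹ * (g * a)) * a⁻¹ := by group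
        rw [this]; exact U₀.mul_mem hxga (U₀.inv_mem ha)
      ext z
      constructor
      · rintro ⟨w, hw, rfl⟩
        exact ⟨(x⁻¹ * g) * w, U₀.mul_mem hu₁ hw, by simp only; group⟩
      · rintro ⟨w, hw, rfl⟩
        exact ⟨(x⁻¹ * g)⁻¹ * w, U₀.mul_mem (U₀.inv_mem hu₁) hw, by simp only; group⟩
    have hsub : {u | u ∈ Set.range (fun g : H => (g * ·) '' (U₀ : Set H)) ∧ ∃ y ∈ u, d x y < r}
        ⊆ {(x * ·) '' (U₀ : Set H)} := by
      rintro u ⟨⟨g, rfl⟩, y, ⟨a, ha, rfl⟩, hxy⟩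
      simp only [Set.mem_singleton_iff]
      exact hcoset g a ha (hU₀sub (by rw [Set.mem_setOf_eq, ← hd.dist_eq]; exact hxy.le))
    refine ⟨(Set.finite_singleton _).subset hsub, ?_⟩
    calc Nat.card {u // u ∈ Set.range (fun g : H => (g * ·) '' (U₀ : Set H)) ∧ ∃ y ∈ u, d x y < r}
        ≤ Nat.card ({(x * ·) '' (U₀ : Set H)} : Set (Set H)) :=
          Nat.card_mono (Set.finite_singleton _).to_subtype hsub
      _ ≤ 0 + 1 := by simp

lemma exists_compact_lift {G : Type*} [Group G] [TopologicalSpace G] [IsTopologicalGroup G]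
    [LocallyCompactSpace G] (N : Subgroup G) [N.Normal] {C : Set (G ⧸ N)} (hC : IsCompact C) :
    ∃ Q : Set G, IsCompact Q ∧ C ⊆ QuotientGroup.mk '' Q := by
  have hsurj : Function.Surjective (QuotientGroup.mk : G → G ⧸ N) := QuotientGroup.mk_surjective
  choose g hg using hsurj
  choose V hVc hVn using fun x : G ⧸ N => exists_compact_mem_nhds (g x)
  obtain ⟨t, -, ht⟩ := hC.elim_nhds_subcover (fun x => QuotientGroup.mk '' V x) (fun x _ => by
    have h := IsOpenMap.image_mem_nhds (f := (QuotientGroup.mk : G → G ⧸ N)) QuotientGroup.isOpenMap_coe (hVn x)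
    rwa [hg x] at h)
  refine ⟨⋃ x ∈ t, V x, t.finite_toSet.isCompact_biUnion (fun x _ => hVc x), ?_⟩
  refine ht.trans ?_
  rw [Set.image_iUnion₂]

/-- Let `1 → N → G → K → 1` be a short exact sequence of locally
compact, compactly generated groups (realized as `N ⊴ G` closed and `K = G ⧸ N`) with `N`
compact or cocompact.  Then `asdim(G) ≤ asdim(N) + asdim(K)` (with respect to any adapted
metrics).  If moreover the sequence splits topologically and `N` is locally elliptic,
then `asdim(G) = asdim(K)`. -/
theorem asDim_extension_le
    (G : Type*) [Group G] [TopologicalSpace G] [IsTopologicalGroup G]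
    [LocallyCompactSpace G] [T2Space G]
    (N : Subgroup G) [N.Normal] (hNclosed : IsClosed (N : Set G))
    (hcc : IsCompact (N : Set G) ∨ CompactSpace (G ⧸ N))
    (hcgG : ∃ K : Set G, IsCompact K ∧ Subgroup.closure K = ⊤)
    (hcgN : ∃ K : Set ↥N, IsCompact K ∧ Subgroup.closure K = ⊤)
    (hcgK : ∃ K : Set (G ⧸ N), IsCompact K ∧ Subgroup.closure K = ⊤)
    (dG : G → G → ℝ) (hdG : IsAdaptedMetric G dG)
    (dN : ↥N → ↥N → ℝ) (hdN : IsAdaptedMetric ↥N dN)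
    (dK : (G ⧸ N) → (G ⧸ N) → ℝ) (hdK : IsAdaptedMetric (G ⧸ N) dK) :
    asDim dG ≤ asDim dN + asDim dK ∧
    ((∃ s : (G ⧸ N) →* G, Continuous s ∧
        (QuotientGroup.mk' N).comp s = MonoidHom.id (G ⧸ N)) →
      LocallyElliptic ↥N → asDim dG = asDim dK) := by
  classical
  have hπcont : Continuous ⇑(QuotientGroup.mk' N) := continuous_quotient_mk'
  have hιcont : Continuous ⇑N.subtype := continuous_subtype_val
  -- properness of the inclusion of N
  have hιprop : ∀ R : ℝ, IsCompact (⇑N.subtype ⁻¹' {y | dG 1 y ≤ R}) := by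
    intro R
    exact hNclosed.isClosedEmbedding_subtypeVal.isCompact_preimage (hdG.proper 1 R)
  -- Case A: N compact ⇒ asDim dG ≤ asDim dK
  have hTAfun : IsCompact (N : Set G) → asDim dG ≤ asDim dK := by
    intro hNc
    have hπprop : ∀ R : ℝ, IsCompact (⇑(QuotientGroup.mk' N) ⁻¹' {y | dK 1 y ≤ R}) := by
      intro R
      obtain ⟨Q, hQc, hQ⟩ := exists_compact_lift N (hdK.proper 1 R)
      refine (hQc.mul hNc).of_isClosed_subset
        ((hdK.isClosed_ball 1 R).preimage hπcont) ?_
      intro g hg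
      obtain ⟨q, hqQ, hq⟩ := hQ hg
      have hmem : q⁻¹ * g ∈ N := QuotientGroup.eq.1 hq
      exact ⟨q, hqQ, q⁻¹ * g, hmem, by group⟩
    refine asDim_le_asDim fun n => ASDimLE.pullback ⇑(QuotientGroup.mk' N) ?_ ?_
    · intro R hR
      obtain ⟨S, hS⟩ := coarse_forward hdG hdK (QuotientGroup.mk' N) hπcont R
      exact ⟨max (S + 1) 1, lt_of_lt_of_le one_pos (le_max_right _ _),
        fun x y h => lt_of_le_of_lt (hS x y h.le)
          (lt_of_lt_of_le (lt_add_one S) (le_max_left _ _))⟩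
    · exact fun D => coarse_backward hdG hdK (QuotientGroup.mk' N) hπprop D
  -- Case B: G ⧸ N compact ⇒ asDim dG ≤ asDim dN
  have hTBfun : CompactSpace (G ⧸ N) → asDim dG ≤ asDim dN := by
    intro hKc
    obtain ⟨Q, hQc, hQ⟩ := exists_compact_lift N (isCompact_univ (X := G ⧸ N))
    obtain ⟨C₀, hC₀0, hC₀⟩ := hdG.exists_bound hQc
    have hρex : ∀ g : G, ∃ m : ↥N, dG g ↑m ≤ C₀ := by
      intro g
      obtain ⟨q, hqQ, hq⟩ := hQ (Set.mem_univ (QuotientGroup.mk g : G ⧸ N))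
      have h1 : q⁻¹ * g ∈ N := QuotientGroup.eq.1 hq
      have hmem : g * q⁻¹ ∈ N := by
        have h2 : g * q⁻¹ = q * (q⁻¹ * g) * q⁻¹ := by group
        rw [h2]
        exact Subgroup.Normal.conj_mem ‹N.Normal› _ h1 q
      refine ⟨⟨g * q⁻¹, hmem⟩, ?_⟩
      rw [hdG.dist_eq]
      have h3 : g⁻¹ * (g * q⁻¹) = q⁻¹ := by group
      rw [h3]
      have h4 : dG 1 q⁻¹ = dG 1 q := by
        calc dG 1 q⁻¹ = dG 1 (q⁻¹ * 1) := by rw [mul_one]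
          _ = dG q 1 := (hdG.dist_eq q 1).symm
          _ = dG 1 q := hdG.symm _ _
      rw [h4]
      exact hC₀ q hqQ
    choose ρ hρ using hρex
    refine asDim_le_asDim fun n => ASDimLE.pullback ρ ?_ ?_
    · intro R hR
      obtain ⟨S, hS⟩ := coarse_backward hdN hdG N.subtype hιprop (R + 2 * C₀)
      refine ⟨max (S + 1) 1, lt_of_lt_of_le one_pos (le_max_right _ _), fun x y h => ?_⟩
      have hxy : dG ↑(ρ x) ↑(ρ y) ≤ R + 2 * C₀ := by
        have t1 := hdG.triangle (↑(ρ x)) x (↑(ρ y))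
        have t2 := hdG.triangle x y (↑(ρ y))
        have s1 := hdG.symm x (↑(ρ x))
        have s2 := hdG.symm y (↑(ρ y))
        have u1 := hρ x
        have u2 := hρ y
        linarith
      exact lt_of_le_of_lt (hS (ρ x) (ρ y) hxy)
        (lt_of_lt_of_le (lt_add_one S) (le_max_left _ _))
    · intro D
      obtain ⟨S, hS⟩ := coarse_forward hdN hdG N.subtype hιcont D
      refine ⟨S + 2 * C₀, fun x y h => ?_⟩
      have h5 := hS (ρ x) (ρ y) h
      have t1 := hdG.triangle x (↑(ρ x)) y
      have t2 := hdG.triangle (↑(ρ x)) (↑(ρ y)) y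
      have s2 := hdG.symm y (↑(ρ y))
      have u1 := hρ x
      have u2 := hρ y
      have h6 : dG (N.subtype (ρ x)) (N.subtype (ρ y)) = dG (↑(ρ x)) (↑(ρ y)) := rfl
      rw [h6] at h5
      linarith
  constructor
  · rcases hcc with hNc | hKc
    · exact le_trans (hTAfun hNc) le_add_self
    · exact le_trans (hTBfun hKc) le_self_add
  · rintro ⟨s, hscont, hscomp⟩ hLE
    have hKG : asDim dK ≤ asDim dG := by
      refine asDim_le_asDim fun n => ASDimLE.pullback ⇑s ?_ ?_
      · intro R hR
        obtain ⟨S, hS⟩ := coarse_forward hdK hdG s hscont R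
        exact ⟨max (S + 1) 1, lt_of_lt_of_le one_pos (le_max_right _ _),
          fun x y h => lt_of_le_of_lt (hS x y h.le)
            (lt_of_lt_of_le (lt_add_one S) (le_max_left _ _))⟩
      · intro D
        obtain ⟨S, hS⟩ := coarse_forward hdG hdK (QuotientGroup.mk' N) hπcont D
        refine ⟨S, fun x y h => ?_⟩
        have h1 := hS (s x) (s y) h
        have h2 : ∀ z : G ⧸ N, QuotientGroup.mk' N (s z) = z := fun z =>
          DFunLike.congr_fun hscomp z
        rwa [h2 x, h2 y] at h1
    rcases hcc with hNc | hKc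
    · exact le_antisymm (hTAfun hNc) hKG
    · have h0 : asDim dN = 0 := asDim_eq_zero (hLE.asDimLE_zero hdN)
      exact le_antisymm ((hTBfun hKc).trans (h0.le.trans zero_le)) hKG
end

section
/- Let G be a totally disconnected, locally compact, second countable, compactly generated group. If G has a compact open subgroup H, then asdim(G) = asdim(G/H), where G/H carries the quotient metric. Consequently: (a) if every discrete quotient G/H (H open) has finite asymptotic dimension then asdim(G) < ∞; and (b) if asdim(G) < ∞ then G has a discrete quotient of finite asymptotic dimension. -/
/-- The quotient metric induced on the coset space `G ⧸ H` by a metric on `G`. -/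
noncomputable def quotientDist {G : Type*} [Group G] (H : Subgroup G) (d : G → G → ℝ)
    (a b : G ⧸ H) : ℝ :=
  sInf {r : ℝ | ∃ x y : G, (x : G ⧸ H) = a ∧ (y : G ⧸ H) = b ∧ d x y = r}

set_option linter.unusedSectionVars false

open Set Pointwise

/-- Van Dantzig: a t.d.l.c. Hausdorff group has a compact open subgroup. -/
theorem exists_compact_open_subgroup (G : Type*) [Group G] [TopologicalSpace G]
    [IsTopologicalGroup G] [LocallyCompactSpace G] [T2Space G] [TotallyDisconnectedSpace G] :
    ∃ H : Subgroup G, IsCompact (H : Set G) ∧ IsOpen (H : Set G) := by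
  obtain ⟨s, hs, h1s, -⟩ := exists_compact_subset isOpen_univ (mem_univ (1 : G))
  obtain ⟨V, hVclopen, h1V, hVs⟩ :=
    loc_compact_Haus_tot_disc_of_zero_dim.exists_subset_of_mem_open h1s isOpen_interior
  have hVcomp : IsCompact V :=
    hs.of_isClosed_subset hVclopen.isClosed (hVs.trans interior_subset)
  obtain ⟨W, hW1, hWV⟩ := compact_open_separated_mul_left hVcomp hVclopen.isOpen le_rfl
  obtain ⟨W₀, hW₀W, hW₀open, h1W₀⟩ := mem_nhds_iff.1 hW1
  set U : Set G := W₀ ∩ W₀⁻¹ with hU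
  have hUopen : IsOpen U := hW₀open.inter hW₀open.inv
  have h1U : (1 : G) ∈ U := ⟨h1W₀, by simpa using h1W₀⟩
  have hUsymm : U⁻¹ = U := by
    ext x; simp only [hU, Set.mem_inter_iff, Set.mem_inv, inv_inv]; tauto
  refine ⟨Subgroup.closure U, ?_, ?_⟩
  · have hsub : (Subgroup.closure U : Set G) ⊆ V := by
      intro x hx
      have hx' : x ∈ Submonoid.closure (U ∪ U⁻¹) := by
        rw [← Subgroup.closure_toSubmonoid]; exact hx
      obtain ⟨l, hl, rfl⟩ := Submonoid.exists_list_of_mem_closure hx'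
      have hlU : ∀ y ∈ l, y ∈ W := by
        intro y hy
        rcases hl y hy with h | h
        · exact hW₀W h.1
        · have : y ∈ U := by rw [← hUsymm]; simpa using h
          exact hW₀W this.1
      clear hl hx hx'
      induction l with
      | nil => simpa using h1V
      | cons a l ih =>
        have : a * l.prod ∈ W * V :=
          Set.mul_mem_mul (hlU a (List.mem_cons_self (a := a) (l := l))) (ih fun y hy => hlU y (List.mem_cons_of_mem a hy))
        simpa using hWV this
    have hclosed : IsClosed (Subgroup.closure U : Set G) :=
      (Subgroup.closure U).isClosed_of_isOpen
        ((Subgroup.closure U).isOpen_of_mem_nhds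
          (Filter.mem_of_superset (hUopen.mem_nhds h1U) Subgroup.subset_closure))
    exact hVcomp.of_isClosed_subset hclosed hsub
  · exact (Subgroup.closure U).isOpen_of_mem_nhds
      (Filter.mem_of_superset (hUopen.mem_nhds h1U) Subgroup.subset_closure)

section Metric

variable {G : Type*} [Group G] [TopologicalSpace G] {d : G → G → ℝ}

private lemma dnn (hd : IsAdaptedMetric G d) (x y : G) : 0 ≤ d x y := by
  have h := hd.triangle x y x
  rw [hd.self x, hd.symm y x] at h
  linarith

variable {H : Subgroup G}

private lemma qset_nonempty (a b : G ⧸ H) :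
    {r : ℝ | ∃ x y : G, (x : G ⧸ H) = a ∧ (y : G ⧸ H) = b ∧ d x y = r}.Nonempty := by
  obtain ⟨x, rfl⟩ := QuotientGroup.mk_surjective a
  obtain ⟨y, rfl⟩ := QuotientGroup.mk_surjective b
  exact ⟨d x y, x, y, rfl, rfl, rfl⟩

private lemma quotientDist_le (hd : IsAdaptedMetric G d) (x y : G) :
    quotientDist H d (x : G ⧸ H) (y : G ⧸ H) ≤ d x y := by
  apply csInf_le
  · refine ⟨0, fun r hr => ?_⟩
    obtain ⟨x', y', -, -, rfl⟩ := hr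
    exact dnn hd x' y'
  · exact ⟨x, y, rfl, rfl, rfl⟩

private lemma le_quotientDist (hd : IsAdaptedMetric G d) {C : ℝ}
    (hC : ∀ h ∈ H, d 1 h ≤ C) (x y : G) :
    d x y - 2 * C ≤ quotientDist H d (x : G ⧸ H) (y : G ⧸ H) := by
  apply le_csInf (qset_nonempty _ _)
  rintro r ⟨x', y', hx', hy', rfl⟩
  have hx : x'⁻¹ * x ∈ H := (QuotientGroup.eq).1 hx'
  have hy : y'⁻¹ * y ∈ H := (QuotientGroup.eq).1 hy'
  have h1 : d x' x ≤ C := by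
    have := hd.leftInvariant x' 1 (x'⁻¹ * x)
    rw [mul_one, mul_inv_cancel_left] at this
    rw [this]; exact hC _ hx
  have h2 : d y' y ≤ C := by
    have := hd.leftInvariant y' 1 (y'⁻¹ * y)
    rw [mul_one, mul_inv_cancel_left] at this
    rw [this]; exact hC _ hy
  have ht : d x y ≤ d x x' + d x' y' + d y' y := by
    have t1 := hd.triangle x x' y
    have t2 := hd.triangle x' y' y
    linarith
  rw [hd.symm x x'] at ht
  linarith

/-- Pull an asdim bound back from the quotient to the group. -/
private lemma asDimLE_of_quot (hd : IsAdaptedMetric G d) {C : ℝ}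
    (hC : ∀ h ∈ H, d 1 h ≤ C) {n : ℕ}
    (hq : ASDimLE (quotientDist H d) n) : ASDimLE d n := by
  intro r hr
  obtain ⟨U, D, hcov, hbd, hmul⟩ := hq r hr
  set q : G → G ⧸ H := QuotientGroup.mk with hqdef
  have hqsurj : Function.Surjective q := QuotientGroup.mk_surjective
  refine ⟨(fun u => q ⁻¹' u) '' U, D + 2 * C, ?_, ?_, ?_⟩
  · intro x
    obtain ⟨u, hu, hx⟩ := hcov (q x)
    exact ⟨q ⁻¹' u, ⟨u, hu, rfl⟩, hx⟩
  · rintro v ⟨u, hu, rfl⟩ x hx y hy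
    have h1 := le_quotientDist hd hC x y
    have h2 := hbd u hu _ hx _ hy
    linarith
  · intro x
    set S := {v | v ∈ (fun u => q ⁻¹' u) '' U ∧ ∃ y ∈ v, d x y < r} with hS
    set T := {u | u ∈ U ∧ ∃ b ∈ u, quotientDist H d (q x) b < r} with hT
    have hmap : ∀ v ∈ S, (fun w => q '' w) v ∈ T := by
      rintro v ⟨⟨u, hu, rfl⟩, y, hy, hdy⟩
      simp only []
      rw [Set.image_preimage_eq u hqsurj]
      exact ⟨hu, q y, hy, lt_of_le_of_lt (quotientDist_le hd x y) hdy⟩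
    have hinj : Set.InjOn (fun w => q '' w) S := by
      rintro v₁ ⟨⟨u₁, hu₁, rfl⟩, -⟩ v₂ ⟨⟨u₂, hu₂, rfl⟩, -⟩ h
      simpa only [Set.image_preimage_eq _ hqsurj] using congrArg (fun w => q ⁻¹' w)
        ((Set.image_preimage_eq u₁ hqsurj).symm.trans (h.trans (Set.image_preimage_eq u₂ hqsurj)))
    obtain ⟨hTfin, hTcard⟩ := hmul (q x)
    have hSsub : (fun w => q '' w) '' S ⊆ T := by
      rintro _ ⟨v, hv, rfl⟩; exact hmap v hv
    have hSfin : S.Finite := Set.Finite.of_finite_image (hTfin.subset hSsub) hinj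
    refine ⟨hSfin, ?_⟩
    have e1 : Nat.card {v // v ∈ S} = S.ncard := (Nat.card_coe_set_eq S)
    have e2 : Nat.card {u // u ∈ T} = T.ncard := (Nat.card_coe_set_eq T)
    calc Nat.card {v // v ∈ (fun u => q ⁻¹' u) '' U ∧ ∃ y ∈ v, d x y < r}
        = S.ncard := e1
      _ = ((fun w => q '' w) '' S).ncard := (Set.ncard_image_of_injOn hinj).symm
      _ ≤ T.ncard := Set.ncard_le_ncard hSsub hTfin
      _ = Nat.card {u // u ∈ U ∧ ∃ b ∈ u, quotientDist H d (q x) b < r} := e2.symm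
      _ ≤ n + 1 := hTcard

/-- Push an asdim bound forward from the group to the quotient. -/
private lemma asDimLE_quot_of (hd : IsAdaptedMetric G d) {C : ℝ} (hC0 : 0 ≤ C)
    (hC : ∀ h ∈ H, d 1 h ≤ C) {n : ℕ}
    (hg : ASDimLE d n) : ASDimLE (quotientDist H d) n := by
  intro r hr
  obtain ⟨U, D, hcov, hbd, hmul⟩ := hg (r + 2 * C) (by linarith)
  set q : G → G ⧸ H := QuotientGroup.mk with hqdef
  have hqsurj : Function.Surjective q := QuotientGroup.mk_surjective
  refine ⟨(fun u => q '' u) '' U, D, ?_, ?_, ?_⟩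
  · intro a
    obtain ⟨x, rfl⟩ := hqsurj a
    obtain ⟨u, hu, hx⟩ := hcov x
    exact ⟨q '' u, ⟨u, hu, rfl⟩, ⟨x, hx, rfl⟩⟩
  · rintro v ⟨u, hu, rfl⟩ a ⟨x', hx', rfl⟩ b ⟨y', hy', rfl⟩
    exact le_trans (quotientDist_le hd x' y') (hbd u hu _ hx' _ hy')
  · intro a
    obtain ⟨x, rfl⟩ := hqsurj a
    set S := {v | v ∈ (fun u => q '' u) '' U ∧ ∃ b ∈ v, quotientDist H d (q x) b < r} with hS
    set T := {u | u ∈ U ∧ ∃ y ∈ u, d x y < r + 2 * C} with hT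
    obtain ⟨hTfin, hTcard⟩ := hmul x
    have hSsub : S ⊆ (fun w => q '' w) '' T := by
      rintro v ⟨⟨u, hu, rfl⟩, b, hb, hdb⟩
      obtain ⟨y, hy, rfl⟩ := hb
      refine ⟨u, ⟨hu, y, hy, ?_⟩, rfl⟩
      have := le_quotientDist hd hC x y
      linarith
    have hSfin : S.Finite := (hTfin.image _).subset hSsub
    refine ⟨hSfin, ?_⟩
    calc Nat.card {v // v ∈ (fun u => q '' u) '' U ∧ ∃ b ∈ v, quotientDist H d (q x) b < r}
        = S.ncard := Nat.card_coe_set_eq S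
      _ ≤ ((fun w => q '' w) '' T).ncard := Set.ncard_le_ncard hSsub (hTfin.image _)
      _ ≤ T.ncard := Set.ncard_image_le hTfin
      _ = Nat.card {u // u ∈ U ∧ ∃ y ∈ u, d x y < r + 2 * C} := (Nat.card_coe_set_eq T).symm
      _ ≤ n + 1 := hTcard

/-- The main equality, for `H` compact. -/
private lemma asDim_eq_quot (hd : IsAdaptedMetric G d)
    (hHc : IsCompact (H : Set G)) : asDim d = asDim (quotientDist H d) := by
  -- bound `d 1 ·` on `H`
  obtain ⟨C, hC0, hC⟩ : ∃ C : ℝ, 0 ≤ C ∧ ∀ h ∈ H, d 1 h ≤ C := by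
    have hopen : ∀ n : ℕ, IsOpen {y : G | d 1 y < (n : ℝ)} := by
      intro n
      rw [hd.compatible]
      intro x hx
      refine ⟨(n : ℝ) - d 1 x, by simpa using hx, fun y hy => ?_⟩
      have := hd.triangle 1 x y
      simp only [Set.mem_setOf_eq] at *
      linarith
    have hcover : (H : Set G) ⊆ ⋃ n : ℕ, {y : G | d 1 y < (n : ℝ)} := by
      intro y _
      exact Set.mem_iUnion.2 ⟨⌊d 1 y⌋₊ + 1, by
        simp only [Set.mem_setOf_eq]; push_cast; exact Nat.lt_floor_add_one _⟩
    obtain ⟨t, ht⟩ := hHc.elim_finite_subcover _ hopen hcover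
    refine ⟨(t.sup id : ℕ), by positivity, fun h hh => ?_⟩
    obtain ⟨n, hn, hdn⟩ := Set.mem_iUnion₂.1 (ht hh)
    exact le_trans hdn.le (by exact_mod_cast Nat.cast_le.2 (Finset.le_sup (f := id) hn))
  have hiff : ∀ n : ℕ, ASDimLE d n ↔ ASDimLE (quotientDist H d) n := fun n =>
    ⟨asDimLE_quot_of hd hC0 hC, asDimLE_of_quot hd hC⟩
  unfold asDim
  congr 1
  ext m
  simp only [Set.mem_image, Set.mem_setOf_eq]
  exact ⟨fun ⟨k, hk, he⟩ => ⟨k, (hiff k).1 hk, he⟩, fun ⟨k, hk, he⟩ => ⟨k, (hiff k).2 hk, he⟩⟩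

end Metric

/-- Let `G` be a totally disconnected, locally compact, second
countable, compactly generated group with an adapted metric `d`.  If `H` is a compact
open subgroup then `asdim(G) = asdim(G/H)` for the quotient metric.  Consequently,
(a) if every discrete quotient `G/H` (with `H` open) has finite asymptotic dimension,
then `asdim(G) < ∞`; and (b) if `asdim(G) < ∞` then `G` has a discrete quotient of
finite asymptotic dimension. -/
theorem asDim_tdlcsc
    (G : Type*) [Group G] [TopologicalSpace G] [IsTopologicalGroup G]
    [LocallyCompactSpace G] [T2Space G] [TotallyDisconnectedSpace G]
    [SecondCountableTopology G]
    (hcg : ∃ K : Set G, IsCompact K ∧ Subgroup.closure K = ⊤)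
    (d : G → G → ℝ) (hd : IsAdaptedMetric G d) :
    (∀ H : Subgroup G, IsCompact (H : Set G) → IsOpen (H : Set G) →
      asDim d = asDim (quotientDist H d)) ∧
    ((∀ H : Subgroup G, IsOpen (H : Set G) → asDim (quotientDist H d) < ⊤) →
      asDim d < ⊤) ∧
    (asDim d < ⊤ →
      ∃ H : Subgroup G, IsOpen (H : Set G) ∧ asDim (quotientDist H d) < ⊤) := by
  have key : ∀ H : Subgroup G, IsCompact (H : Set G) →
      asDim d = asDim (quotientDist H d) := fun H hc => asDim_eq_quot hd hc
  obtain ⟨H₀, hH₀c, hH₀o⟩ := exists_compact_open_subgroup G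
  refine ⟨fun H hc _ => key H hc, fun hall => ?_, fun hfin => ?_⟩
  · rw [key H₀ hH₀c]
    exact hall H₀ hH₀o
  · exact ⟨H₀, hH₀o, (key H₀ hH₀c) ▸ hfin⟩
end
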